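/- Let R be an integral domain admitting a function f that is both strongly Euclidean and uniquely Euclidean. Then either R is a field, or there exists a field K such that R is isomorphic as a ring to the polynomial ring K[x]. -/

import Mathlib

/-- `f` is a Euclidean function on `R`: for all `a b : R` with `b ≠ 0`, there exist
`q, r` with `a = q * b + r` and (`r = 0` or `f r < f b`). -/
def IsEuclideanFn {R : Type*} [CommRing R] (f : R → ℕ) : Prop :=
  ∀ a b : R, b ≠ 0 → ∃ q r : R, a = q * b + r ∧ (r = 0 ∨ f r < f b)

/-- `f` is strongly Euclidean: Euclidean, and `f a ≤ f (a * b)` for nonzero `a, b`. -/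
def IsStronglyEuclideanFn {R : Type*} [CommRing R] (f : R → ℕ) : Prop :=
  IsEuclideanFn f ∧ ∀ a b : R, a ≠ 0 → b ≠ 0 → f a ≤ f (a * b)

/-- `f` is ultra-Euclidean: Euclidean, and `f (a + b) ≤ max (f a) (f b)` for nonzero
`a, b` with `a + b ≠ 0`. -/
def IsUltraEuclideanFn {R : Type*} [CommRing R] (f : R → ℕ) : Prop :=
  IsEuclideanFn f ∧ ∀ a b : R, a ≠ 0 → b ≠ 0 → a + b ≠ 0 → f (a + b) ≤ max (f a) (f b)

/-- `f` is uniquely Euclidean: for all `a b : R` with `b ≠ 0`, there is a *unique* pair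
`(q, r)` with `a = q * b + r` and (`r = 0` or `f r < f b`). -/
def IsUniquelyEuclideanFn {R : Type*} [CommRing R] (f : R → ℕ) : Prop :=
  ∀ a b : R, b ≠ 0 → ∃! qr : R × R, a = qr.1 * b + qr.2 ∧ (qr.2 = 0 ∨ f qr.2 < f b)

/-- The refinement of `f`: `f̃ a` is the minimum of `f (a * b)` over nonzero `b`. -/
noncomputable def refinement {R : Type*} [CommRing R] (f : R → ℕ) (a : R) : ℕ :=
  sInf {n : ℕ | ∃ b : R, b ≠ 0 ∧ f (a * b) = n}

universe u

theorem jodeit_rhai {R : Type u} [CommRing R] [IsDomain R]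
    (f : R → ℕ) (hf : IsStronglyEuclideanFn f) (hf' : IsUniquelyEuclideanFn f) :
    IsField R ∨ ∃ (K : Type u) (_ : Field K), Nonempty (R ≃+* Polynomial K) := by
  classical
  obtain ⟨hEuc, hStrong⟩ := hf
  -- f(-a) = f a
  have fneg : ∀ a : R, a ≠ 0 → f (-a) = f a := by
    intro a ha
    have h1 := hStrong a (-1) ha (by simp)
    have h2 := hStrong (-a) (-1) (neg_ne_zero.2 ha) (by simp)
    simp only [mul_neg, mul_one, neg_neg] at h1 h2
    omega
  -- ultrametric property from uniqueness
  have ultra : ∀ a b : R, a ≠ 0 → b ≠ 0 → a + b ≠ 0 →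
      f (a + b) ≤ max (f a) (f b) := by
    intro a b ha hb hab
    by_contra hlt
    push_neg at hlt
    obtain ⟨qr, _, huniq⟩ := hf' a (a + b) hab
    have h1 : ((0, a) : R × R) = qr :=
      huniq (0, a) ⟨by ring, Or.inr (by simp only; omega)⟩
    have h2 : ((1, -b) : R × R) = qr :=
      huniq (1, -b) ⟨by ring, Or.inr (by simp only [fneg b hb]; omega)⟩
    exact zero_ne_one (congrArg Prod.fst (h1.trans h2.symm))
  have fone : ∀ a : R, a ≠ 0 → f 1 ≤ f a := by
    intro a ha
    simpa using hStrong 1 a one_ne_zero ha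
  have funit : ∀ a : R, IsUnit a → f a = f 1 := by
    rintro a ⟨u, rfl⟩
    have h1 := fone (u : R) u.ne_zero
    have h2 := hStrong (u : R) (↑u⁻¹) u.ne_zero u⁻¹.ne_zero
    rw [Units.mul_inv] at h2
    omega
  have unit_of : ∀ a : R, a ≠ 0 → f a ≤ f 1 → IsUnit a := by
    intro a ha hfa
    obtain ⟨q, r, hqr, hr⟩ := hEuc 1 a ha
    rcases hr with rfl | hfr
    · rw [add_zero] at hqr
      exact IsUnit.of_mul_eq_one (a := a) q (by rw [mul_comm]; exact hqr.symm)
    · by_cases hr0 : r = 0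
      · subst hr0; rw [add_zero] at hqr
        exact IsUnit.of_mul_eq_one (a := a) q (by rw [mul_comm]; exact hqr.symm)
      · have := fone r hr0
        omega
  -- strict multiplicativity for nonunit factors
  have fstrict : ∀ a b : R, a ≠ 0 → b ≠ 0 → ¬ IsUnit b → f a < f (a * b) := by
    intro a b ha hb hbu
    obtain ⟨s, r, hsr, hr⟩ := hEuc a (a * b) (mul_ne_zero ha hb)
    by_cases hr0 : r = 0
    · subst hr0
      rw [add_zero] at hsr
      have : b * s = 1 := by
        have : a * 1 = a * (s * b) := by linear_combination hsr
        have := mul_left_cancel₀ ha this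
        rw [mul_comm b s]; exact this.symm
      exact absurd (IsUnit.of_mul_eq_one (a := b) s this) hbu
    · have hfr : f r < f (a * b) := hr.resolve_left hr0
      have hrrep : r = a * (1 - s * b) := by linear_combination -hsr
      have h1sb : (1 : R) - s * b ≠ 0 := by
        intro h
        have : b * s = 1 := by
          have : s * b = 1 := by linear_combination -h
          rw [mul_comm]; exact this
        exact hbu (IsUnit.of_mul_eq_one (a := b) s this)
      have := hStrong a (1 - s * b) ha h1sb
      rw [← hrrep] at this
      omega
  by_cases hfield : ∀ a : R, a ≠ 0 → IsUnit a
  · left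
    refine ⟨exists_pair_ne R, mul_comm, ?_⟩
    intro a ha
    obtain ⟨u, rfl⟩ := hfield a ha
    exact ⟨↑u⁻¹, u.mul_inv⟩
  · right
    push_neg at hfield
    obtain ⟨a₀, ha₀, ha₀u⟩ := hfield
    -- minimal nonunit x
    set S : Set ℕ := {n | ∃ a : R, a ≠ 0 ∧ ¬ IsUnit a ∧ f a = n} with hSdef
    have hSne : S.Nonempty := ⟨f a₀, a₀, ha₀, ha₀u, rfl⟩
    obtain ⟨x, hx0, hxu, hxf⟩ := Nat.sInf_mem hSne
    have hxmin : ∀ a : R, a ≠ 0 → ¬ IsUnit a → f x ≤ f a := by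
      intro a ha hau
      rw [hxf]
      exact Nat.sInf_le ⟨a, ha, hau, rfl⟩
    have hx1 : f 1 < f x := by
      have h1 := fone x hx0
      rcases lt_or_eq_of_le h1 with h | h
      · exact h
      · exact absurd (unit_of x hx0 h.ge) hxu
    -- the subfield K of units and zero
    let Ksub : Subring R :=
      { carrier := {a : R | a = 0 ∨ IsUnit a}
        zero_mem' := Or.inl rfl
        one_mem' := Or.inr isUnit_one
        add_mem' := by
          rintro a b (rfl | hau) (rfl | hbu)
          · simpa using Or.inl rfl
          · simpa using Or.inr hbu
          · simpa using Or.inr hau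
          · by_cases hab : a + b = 0
            · exact Or.inl hab
            · refine Or.inr (unit_of _ hab ?_)
              have := ultra a b hau.ne_zero hbu.ne_zero hab
              rw [funit a hau, funit b hbu] at this
              omega
        neg_mem' := by
          rintro a (rfl | hau)
          · simp
          · exact Or.inr hau.neg
        mul_mem' := by
          rintro a b (rfl | hau) (rfl | hbu)
          · simpa using Or.inl rfl
          · simpa using Or.inl rfl
          · simpa using Or.inl rfl
          · exact Or.inr (hau.mul hbu) }
    have hKfield : IsField ↥Ksub := by
      refine ⟨⟨0, 1, ?_⟩, mul_comm, ?_⟩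
      · intro h
        exact zero_ne_one (congrArg Subtype.val h)
      · intro a ha
        have ha1 : (a : R) ≠ 0 := fun h => ha (Subtype.ext h)
        have hau : IsUnit (a : R) := a.2.resolve_left ha1
        obtain ⟨u, hu⟩ := hau
        refine ⟨⟨↑u⁻¹, Or.inr u⁻¹.isUnit⟩, ?_⟩
        ext
        show (a : R) * ↑u⁻¹ = 1
        rw [← hu]
        exact u.mul_inv
    letI : Field ↥Ksub := hKfield.toField
    -- remainders mod x lie in Ksub, and elements of Ksub are valid remainders
    have hrem : ∀ c : R, c ∈ Ksub → c = 0 ∨ f c < f x := by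
      rintro c (rfl | hcu)
      · exact Or.inl rfl
      · right; rw [funit c hcu]; exact hx1
    -- unique division of 0 by x
    have hdiv0 : ∀ q r : R, (0 : R) = q * x + r → (r = 0 ∨ f r < f x) →
        q = 0 ∧ r = 0 := by
      intro q r h hr
      obtain ⟨qr, _, huniq⟩ := hf' 0 x hx0
      have e1 : ((q, r) : R × R) = qr := huniq (q, r) ⟨h, hr⟩
      have e2 : ((0, 0) : R × R) = qr := huniq (0, 0) ⟨by ring, Or.inl rfl⟩
      have := e1.trans e2.symm
      exact ⟨congrArg Prod.fst this, congrArg Prod.snd this⟩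
    let φ : Polynomial ↥Ksub →+* R := Polynomial.eval₂RingHom Ksub.subtype x
    have hφC : ∀ c : ↥Ksub, φ (Polynomial.C c) = (c : R) := by
      intro c; simp [φ]
    -- injectivity
    have hker : ∀ n : ℕ, ∀ p : Polynomial ↥Ksub, p.natDegree ≤ n → φ p = 0 → p = 0 := by
      intro n
      induction n with
      | zero =>
        intro p hdeg hp0
        obtain ⟨c, rfl⟩ := Polynomial.natDegree_eq_zero.1 (Nat.le_zero.1 hdeg)
        rw [hφC] at hp0
        rw [show c = 0 from Subtype.ext hp0]
        simp
      | succ n ih =>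
        intro p hdeg hp0
        have hrep := Polynomial.X_mul_divX_add p
        have hphi : (0 : R) = φ p.divX * x + ((p.coeff 0 : ↥Ksub) : R) := by
          rw [← hp0]
          conv_lhs => rw [← hrep]
          rw [map_add, map_mul, hφC]
          have hX : φ Polynomial.X = x := by simp [φ]
          rw [hX, mul_comm]
        obtain ⟨hq0, hr0⟩ := hdiv0 _ _ hphi (hrem _ (p.coeff 0).2)
        have hdiv : p.divX = 0 := by
          apply ih _ _ hq0
          have := Polynomial.natDegree_divX_eq_natDegree_tsub_one (p := p)
          omega
        have hc : p.coeff 0 = 0 := Subtype.ext hr0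
        rw [← hrep, hdiv, hc]
        simp
    have hinj : Function.Injective φ := by
      rw [injective_iff_map_eq_zero]
      intro p hp
      exact hker p.natDegree p le_rfl hp
    -- surjectivity
    have hsurj0 : ∀ n : ℕ, ∀ a : R, a ≠ 0 → f a ≤ n → ∃ p, φ p = a := by
      intro n
      induction n using Nat.strong_induction_on with
      | _ n ih =>
      intro a ha hfa
      obtain ⟨q, r, hqr, hr⟩ := hEuc a x hx0
      have hrK : r ∈ Ksub := by
        by_cases hr0 : r = 0
        · exact Or.inl hr0
        · refine Or.inr ?_
          have hfr : f r < f x := hr.resolve_left hr0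
          by_contra hru
          exact absurd (hxmin r hr0 hru) (by omega)
      by_cases hq : q = 0
      · refine ⟨Polynomial.C ⟨r, hrK⟩, ?_⟩
        rw [hφC]
        rw [hqr, hq, zero_mul, zero_add]
      · have hqx : q * x ≠ 0 := mul_ne_zero hq hx0
        have h1 : f x ≤ f (q * x) := by
          have := hStrong x q hx0 hq
          rwa [mul_comm] at this
        have h2 : f q < f (q * x) := fstrict q x hq hx0 hxu
        have h3 : f (q * x) ≤ f a := by
          by_cases hr0 : r = 0
          · subst hr0
            rw [add_zero] at hqr
            rw [← hqr]
          · have hfr : f r < f x := hr.resolve_left hr0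
            have heq : a + -r = q * x := by rw [hqr]; ring
            have hne : a + -r ≠ 0 := heq ▸ hqx
            have hu := ultra a (-r) ha (neg_ne_zero.2 hr0) hne
            rw [fneg r hr0, heq] at hu
            omega
        have hfq : f q < n := by omega
        obtain ⟨p', hp'⟩ := ih (f q) hfq q hq le_rfl
        refine ⟨p' * Polynomial.X + Polynomial.C ⟨r, hrK⟩, ?_⟩
        rw [map_add, map_mul, hφC, hp', hqr]
        simp [φ]
    have hsurj : Function.Surjective φ := by
      intro a
      by_cases ha : a = 0
      · exact ⟨0, by simp [ha]⟩
      · exact hsurj0 (f a) a ha le_rfl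
    exact ⟨↥Ksub, inferInstance, ⟨(RingEquiv.ofBijective φ ⟨hinj, hsurj⟩).symm⟩⟩
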